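/- Soundness of the tableau rule for truncated subtraction when the target interval excludes 0: for v ∈ [0,1], a constant c ∈ [0,1], and an interval I ⊆ [0,1] with 0 ∉ I, we have max(0, v - c) ∈ I if and only if v ∈ {x + c | x ∈ I, x + c ≤ 1}. -/
import Mathlib


/-- Soundness of the `(⊖)` tableau rule in the case `0 ∉ I`:
`max 0 (v - c) ∈ I ↔ v ∈ I + c`. -/
theorem stmt9 (v c : ℝ) (hv : v ∈ Set.Icc (0:ℝ) 1) (hc : c ∈ Set.Icc (0:ℝ) 1)
    (I : Set ℝ) (hI : I ⊆ Set.Icc (0:ℝ) 1) (h0 : (0:ℝ) ∉ I) :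
    max 0 (v - c) ∈ I ↔ v ∈ {y : ℝ | ∃ x ∈ I, x + c ≤ 1 ∧ y = x + c} := by
  constructor
  · intro h
    have hne : max 0 (v - c) ≠ 0 := fun e => h0 (e ▸ h)
    have hpos : 0 < v - c := by
      rcases le_or_gt (v - c) 0 with hle | hlt
      · exact absurd (max_eq_left hle) hne
      · exact hlt
    rw [max_eq_right hpos.le] at h
    exact ⟨v - c, h, by linarith [hv.2], by ring⟩
  · rintro ⟨x, hx, hxc, rfl⟩
    have := (hI hx).1
    rwa [show max 0 (x + c - c) = x by rw [add_sub_cancel_right]; exact max_eq_right this]
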